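/- Under the policy gradient dynamics with η ≤ 1/2 and bounded rewards Y_t ∈ [0,1], for each arm a and δ ∈ (0,1), P(min_{1 ≤ t ≤ n} θ_{t,a} ≤ −log(n/δ)) ≤ δ. -/
import Mathlib


open MeasureTheory Real Finset

/-- Lemma 1.2: under the policy gradient dynamics with `η ≤ 1/2` and rewards
in `[0,1]`, for each arm `a` and `δ ∈ (0,1)`,
`P(min_{1 ≤ t ≤ n} θ_{t,a} ≤ -log (n/δ)) ≤ δ`. -/
theorem stmt12 {Ω : Type*} {m : MeasurableSpace Ω} {μ : Measure Ω}
    [IsProbabilityMeasure μ] (ℱ : Filtration ℕ m)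
    (k n : ℕ) (hk : 1 ≤ k) (hn : 1 ≤ n)
    (η : ℝ) (hη0 : 0 < η) (hη : η ≤ 1 / 2)
    (A : ℕ → Ω → Fin k) (Y : ℕ → Ω → ℝ)
    (θ : ℕ → Ω → Fin k → ℝ) (p : ℕ → Ω → Fin k → ℝ)
    (hp : ∀ t ω a, p t ω a = Real.exp (θ t ω a) / ∑ b, Real.exp (θ t ω b))
    (hθ1 : ∀ ω a, θ 1 ω a = 0)
    (hrec : ∀ t, 1 ≤ t → ∀ ω a, θ (t + 1) ω a =
      θ t ω a + η * ((if A t ω = a then (1:ℝ) else 0) - p t ω a) * Y t ω)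
    (hY01 : ∀ t ω, Y t ω ∈ Set.Icc (0:ℝ) 1)
    (hAmeas : ∀ t, 1 ≤ t → Measurable[ℱ t] (A t))
    (hYmeas : ∀ t, 1 ≤ t → Measurable[ℱ t] (Y t))
    (hθmeas : ∀ t, 1 ≤ t → ∀ a, Measurable[ℱ (t - 1)] (fun ω => θ t ω a))
    (hAlaw : ∀ t, 1 ≤ t → ∀ a : Fin k,
      μ[(fun ω => if A t ω = a then (1:ℝ) else 0) | ℱ (t - 1)]
        =ᵐ[μ] fun ω => p t ω a)
    (a : Fin k) (δ : ℝ) (hδ : δ ∈ Set.Ioo (0:ℝ) 1) :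
    μ {ω | ∃ t ∈ Finset.Icc 1 n, θ t ω a ≤ -Real.log ((n : ℝ) / δ)}
      ≤ ENNReal.ofReal δ := by
  have hkne : Nonempty (Fin k) := ⟨⟨0, hk⟩⟩
  have huniv : (Finset.univ : Finset (Fin k)).Nonempty := Finset.univ_nonempty
  -- the sum of all logits is always zero
  have hsum : ∀ t, 1 ≤ t → ∀ ω, ∑ b, θ t ω b = 0 := by
    intro t ht
    induction t, ht using Nat.le_induction with
    | base => intro ω; simp [hθ1]
    | succ t ht ih =>
      intro ω
      have hS : (0:ℝ) < ∑ b, Real.exp (θ t ω b) :=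
        Finset.sum_pos (fun b _ => Real.exp_pos _) huniv
      have hpsum : ∑ b, p t ω b = 1 := by
        simp only [hp]
        rw [← Finset.sum_div, div_self (ne_of_gt hS)]
      have hind : ∑ b, (if A t ω = b then (1:ℝ) else 0) = 1 := by simp
      have hre : ∀ b, θ (t+1) ω b =
          θ t ω b + η * ((if A t ω = b then (1:ℝ) else 0) - p t ω b) * Y t ω :=
        hrec t ht ω
      calc ∑ b, θ (t+1) ω b
          = ∑ b, (θ t ω b + η * ((if A t ω = b then (1:ℝ) else 0) - p t ω b) * Y t ω) := by
            exact Finset.sum_congr rfl (fun b _ => hre b)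
        _ = (∑ b, θ t ω b)
            + η * Y t ω * ((∑ b, (if A t ω = b then (1:ℝ) else 0)) - ∑ b, p t ω b) := by
            rw [Finset.sum_add_distrib, ← Finset.sum_sub_distrib, Finset.mul_sum]
            congr 1
            exact Finset.sum_congr rfl (fun b _ => by ring)
        _ = 0 := by rw [ih ω, hind, hpsum]; ring
  -- main deterministic bound : exp (-θ t ω a) ≤ t
  have hmain : ∀ t, 1 ≤ t → ∀ ω, Real.exp (-(θ t ω a)) ≤ (t : ℝ) := by
    intro t ht
    induction t, ht using Nat.le_induction with
    | base => intro ω; simp [hθ1]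
    | succ t ht ih =>
      intro ω
      set S := ∑ b, Real.exp (θ t ω b) with hSdef
      have hS0 : (0:ℝ) < S := Finset.sum_pos (fun b _ => Real.exp_pos _) huniv
      -- some logit is nonnegative
      obtain ⟨b, hb⟩ : ∃ b, 0 ≤ θ t ω b := by
        by_contra hcon
        push_neg at hcon
        have h1 : ∑ c, θ t ω c < ∑ _c : Fin k, (0:ℝ) :=
          Finset.sum_lt_sum_of_nonempty huniv (fun c _ => hcon c)
        rw [hsum t ht ω] at h1
        simp at h1
      have hS1 : (1:ℝ) ≤ S := by
        calc (1:ℝ) ≤ Real.exp (θ t ω b) := Real.one_le_exp hb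
          _ ≤ S := Finset.single_le_sum (f := fun c => Real.exp (θ t ω c))
              (fun c _ => (Real.exp_pos _).le) (Finset.mem_univ b)
      have hpa_le : Real.exp (θ t ω a) ≤ S :=
        Finset.single_le_sum (f := fun c => Real.exp (θ t ω c))
          (fun c _ => (Real.exp_pos _).le) (Finset.mem_univ a)
      have hp0 : 0 ≤ p t ω a := by
        rw [hp]; positivity
      have hp1 : p t ω a ≤ 1 := by
        rw [hp]; exact div_le_one_of_le₀ hpa_le hS0.le
      have hpe : p t ω a * Real.exp (-(θ t ω a)) ≤ 1 := by
        rw [hp, Real.exp_neg]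
        rw [div_mul_eq_mul_div, mul_inv_cancel₀ (ne_of_gt (Real.exp_pos _))]
        rw [div_le_one hS0]
        exact hS1
      obtain ⟨hY0, hY1⟩ := hY01 t ω
      -- one-step bound on the decrease
      have hstep : -(θ (t+1) ω a) ≤ -(θ t ω a) + η * p t ω a * Y t ω := by
        rw [hrec t ht ω a]
        split_ifs with h
        · nlinarith
        · ring_nf; nlinarith
      set x := η * p t ω a * Y t ω with hxdef
      have hx0 : 0 ≤ x := by positivity
      have hpy0 : 0 ≤ p t ω a * Y t ω := mul_nonneg hp0 hY0
      have hpy1 : p t ω a * Y t ω ≤ 1 := mul_le_one₀ hp1 hY0 hY1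
      have hx12 : x ≤ 1/2 := by
        rw [hxdef, mul_assoc]
        nlinarith [mul_le_mul_of_nonneg_left hpy1 hη0.le]
      have hexp : Real.exp x ≤ 1 + 2*x := by
        have hme : Real.exp (-x) * Real.exp x = 1 := by
          rw [← Real.exp_add]; norm_num
        have h1 : 1 - x ≤ Real.exp (-x) := by linarith [Real.add_one_le_exp (-x)]
        have h3 : (1 - x) * Real.exp x ≤ 1 := by
          calc (1-x) * Real.exp x ≤ Real.exp (-x) * Real.exp x :=
                mul_le_mul_of_nonneg_right h1 (Real.exp_pos x).le
            _ = 1 := hme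
        nlinarith [Real.exp_pos x, sq_nonneg x]
      calc Real.exp (-(θ (t+1) ω a))
          ≤ Real.exp (-(θ t ω a) + x) := Real.exp_le_exp.mpr hstep
        _ = Real.exp (-(θ t ω a)) * Real.exp x := Real.exp_add _ _
        _ ≤ Real.exp (-(θ t ω a)) * (1 + 2*x) :=
            mul_le_mul_of_nonneg_left hexp (Real.exp_pos _).le
        _ = Real.exp (-(θ t ω a)) + 2 * η * Y t ω * (p t ω a * Real.exp (-(θ t ω a))) := by
            rw [hxdef]; ring
        _ ≤ (t:ℝ) + 1 := by
            have h2 : 2 * η * Y t ω * (p t ω a * Real.exp (-(θ t ω a))) ≤ 1 := by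
              have hq0 : 0 ≤ p t ω a * Real.exp (-(θ t ω a)) :=
                mul_nonneg hp0 (Real.exp_pos _).le
              have hYq1 : Y t ω * (p t ω a * Real.exp (-(θ t ω a))) ≤ 1 :=
                mul_le_one₀ hY1 hq0 hpe
              nlinarith [mul_le_mul_of_nonneg_left hYq1 hη0.le]
            linarith [ih ω]
        _ = ((t+1 : ℕ) : ℝ) := by push_cast; ring
  -- the event is empty
  have hempty : {ω | ∃ t ∈ Finset.Icc 1 n, θ t ω a ≤ -Real.log ((n : ℝ) / δ)} = ∅ := by
    ext ω
    simp only [Set.mem_setOf_eq, Set.mem_empty_iff_false, iff_false, not_exists]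
    rintro t ⟨htmem, hle⟩
    rw [Finset.mem_Icc] at htmem
    have hn1 : (1:ℝ) ≤ (n:ℝ) := by exact_mod_cast hn
    have hnd : (0:ℝ) < (n:ℝ)/δ := div_pos (by linarith) hδ.1
    have h1 : (n:ℝ)/δ ≤ Real.exp (-(θ t ω a)) := by
      rw [← Real.exp_log hnd]
      exact Real.exp_le_exp.mpr (by linarith)
    have h2 : Real.exp (-(θ t ω a)) ≤ (t:ℝ) := hmain t htmem.1 ω
    have h3 : (t:ℝ) ≤ (n:ℝ) := Nat.cast_le.mpr htmem.2
    have h4 : (n:ℝ) < (n:ℝ)/δ := by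
      rw [lt_div_iff₀ hδ.1]
      nlinarith [hδ.2]
    linarith
  rw [hempty]
  simp
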